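/- Let φ : [0,∞) → ℝ be C², strictly increasing, bounded, with φ(0) = 0, φ'(0) > 0, φ'' bounded, and φ'(x) → 0 as x → ∞. For h ≥ 1 and x ∈ [0, h], define f(h, x) = φ(h − x) + φ(h + x) − φ(2h). Then there exist L ≥ 1 and η > 0, depending only on φ, such that for all h ≥ L: (i) ∂_x f(h, x) < −φ'(0)/4 for x ∈ [h − η, h]; (ii) f(h, x) ≥ 0 for all x ∈ [0, h]. -/

import Mathlib

/-- The reflected lower-solution profile `f(h,x) = φ(h−x) + φ(h+x) − φ(2h)` is nonnegative
on `[0,h]` for `h` large, with `∂ₓ f(h,x) < −φ'(0)/4` near `x = h`. -/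
theorem stmt9 (φ φ' φ'' : ℝ → ℝ)
    (hφd : ∀ x, 0 ≤ x → HasDerivAt φ (φ' x) x)
    (hφd2 : ∀ x, 0 ≤ x → HasDerivAt φ' (φ'' x) x)
    (hmono : StrictMonoOn φ (Set.Ici 0))
    (hbdd : ∃ B, ∀ x, 0 ≤ x → φ x ≤ B)
    (hφ0 : φ 0 = 0) (hφ'0 : 0 < φ' 0)
    (hφ''bdd : ∃ B, ∀ x, 0 ≤ x → |φ'' x| ≤ B)
    (hlim : Filter.Tendsto φ' Filter.atTop (nhds 0)) :
    ∃ L ≥ (1:ℝ), ∃ η > 0, ∀ h, L ≤ h →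
      (∀ x, h - η ≤ x → x ≤ h → -φ' (h - x) + φ' (h + x) < -(φ' 0) / 4) ∧
      (∀ x, 0 ≤ x → x ≤ h → 0 ≤ φ (h - x) + φ (h + x) - φ (2 * h)) := by
  obtain ⟨B, hB⟩ := hφ''bdd
  obtain ⟨Bφ, hBφ⟩ := hbdd
  set B1 : ℝ := max B 1 with hB1
  have hB1pos : (0:ℝ) < B1 := lt_of_lt_of_le one_pos (le_max_right _ _)
  set η : ℝ := min 1 (φ' 0 / (8 * B1)) with hηdef
  have hηpos : 0 < η := lt_min one_pos (by positivity)
  have hη1 : η ≤ 1 := min_le_left _ _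
  have hηB : η ≤ φ' 0 / (8 * B1) := min_le_right _ _
  -- Lipschitz bound on φ' near 0
  have hlip : ∀ z, 0 ≤ z → z ≤ η → φ' 0 * (7/8) ≤ φ' z := by
    intro z hz0 hzη
    have hconv : Convex ℝ (Set.Icc (0:ℝ) η) := convex_Icc _ _
    have hderiv : ∀ x ∈ Set.Icc (0:ℝ) η, HasDerivWithinAt φ' (φ'' x) (Set.Icc 0 η) x :=
      fun x hx => (hφd2 x hx.1).hasDerivWithinAt
    have hbound : ∀ x ∈ Set.Icc (0:ℝ) η, ‖φ'' x‖ ≤ B1 :=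
      fun x hx => (hB x hx.1).trans (le_max_left _ _)
    have hkey := hconv.norm_image_sub_le_of_norm_hasDerivWithin_le hderiv hbound
      (Set.mem_Icc.2 ⟨le_refl 0, hηpos.le⟩) (Set.mem_Icc.2 ⟨hz0, hzη⟩)
    rw [Real.norm_eq_abs, Real.norm_eq_abs, sub_zero] at hkey
    have h1 : B1 * |z| ≤ B1 * η := by
      apply mul_le_mul_of_nonneg_left _ hB1pos.le
      rwa [abs_of_nonneg hz0]
    have h2 : B1 * η ≤ φ' 0 / 8 := by
      calc B1 * η ≤ B1 * (φ' 0 / (8 * B1)) := mul_le_mul_of_nonneg_left hηB hB1pos.le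
        _ = φ' 0 / 8 := by field_simp
    have habs := abs_le.1 (hkey.trans (h1.trans h2))
    linarith [habs.1]
  -- tail smallness of φ'
  obtain ⟨N, hN⟩ := (Metric.tendsto_atTop.1 hlim) (φ' 0 / 8) (by positivity)
  -- sup of φ and near-sup point
  set S := sSup (φ '' Set.Ici 0) with hS
  have hne : (φ '' Set.Ici 0).Nonempty := ⟨φ 0, 0, Set.mem_Ici.2 (le_refl 0), rfl⟩
  have hbdda : BddAbove (φ '' Set.Ici 0) := ⟨Bφ, by rintro _ ⟨x, hx, rfl⟩; exact hBφ x hx⟩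
  have hφη : 0 < φ η := by
    have := hmono (Set.mem_Ici.2 (le_refl 0)) (Set.mem_Ici.2 hηpos.le) hηpos
    rwa [hφ0] at this
  obtain ⟨_, ⟨y, hy0, rfl⟩, hyS⟩ := exists_lt_of_lt_csSup hne (by linarith : S - φ η < S)
  set L : ℝ := max (max 1 N) (max η y) with hL
  have hL1 : (1:ℝ) ≤ L := (le_max_left 1 N).trans (le_max_left _ _)
  -- main boundary derivative estimate
  have key : ∀ h, L ≤ h → ∀ x, h - η ≤ x → x ≤ h → -φ' (h - x) + φ' (h + x) < -(φ' 0) / 4 := by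
    intro h hLh x hx1 hx2
    have hh1 : (1:ℝ) ≤ h := hL1.trans hLh
    have hhN : N ≤ h := ((le_max_right 1 N).trans (le_max_left _ _)).trans hLh
    have h1 : φ' 0 * (7/8) ≤ φ' (h - x) := hlip _ (by linarith) (by linarith)
    have hx0 : 0 ≤ x := by linarith
    have h2 : dist (φ' (h + x)) 0 < φ' 0 / 8 := hN (h + x) (by linarith)
    rw [Real.dist_eq, sub_zero] at h2
    have h3 := (abs_lt.1 h2).2
    linarith
  refine ⟨L, hL1, η, hηpos, ?_⟩
  intro h hLh
  have hh1 : (1:ℝ) ≤ h := hL1.trans hLh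
  have hhη : η ≤ h := ((le_max_left η y).trans (le_max_right _ _)).trans hLh
  have hhy : y ≤ h := ((le_max_right η y).trans (le_max_right _ _)).trans hLh
  refine ⟨key h hLh, ?_⟩
  intro x hx0 hxh
  rcases le_or_gt x (h - η) with hcase | hcase
  · -- bulk case
    have hm1 : φ η ≤ φ (h - x) :=
      hmono.monotoneOn (Set.mem_Ici.2 hηpos.le) (Set.mem_Ici.2 (by linarith)) (by linarith)
    have hm2 : φ y ≤ φ (h + x) :=
      hmono.monotoneOn (Set.mem_Ici.2 hy0) (Set.mem_Ici.2 (by linarith)) (by linarith)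
    have hm3 : φ (2 * h) ≤ S := le_csSup hbdda ⟨2 * h, Set.mem_Ici.2 (by linarith), rfl⟩
    linarith
  · rcases eq_or_lt_of_le hxh with rfl | hxlt
    · have h2x : x + x = 2 * x := by ring
      rw [sub_self, hφ0, h2x]
      simp
    · -- mean value argument on [x, h]
      set g : ℝ → ℝ := fun t => φ (h - t) + φ (h + t) with hg
      have hgd : ∀ t ∈ Set.Icc x h, HasDerivAt g (-φ' (h - t) + φ' (h + t)) t := by
        intro t ht
        have h1 : (0:ℝ) ≤ h - t := by linarith [ht.2]
        have h2 : (0:ℝ) ≤ h + t := by linarith [ht.1]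
        have d1 : HasDerivAt (fun t => φ (h - t)) (φ' (h - t) * (-1)) t :=
          (hφd _ h1).comp t ((hasDerivAt_id t).const_sub h)
        have d2 : HasDerivAt (fun t => φ (h + t)) (φ' (h + t) * 1) t :=
          (hφd _ h2).comp t ((hasDerivAt_id t).const_add h)
        have := d1.add d2
        exact this.congr_deriv (by ring)
      have hcont : ContinuousOn g (Set.Icc x h) :=
        fun t ht => (hgd t ht).continuousAt.continuousWithinAt
      obtain ⟨c, hc, hceq⟩ := exists_hasDerivAt_eq_slope g
        (fun t => -φ' (h - t) + φ' (h + t)) hxlt hcont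
        (fun t ht => hgd t ⟨ht.1.le, ht.2.le⟩)
      have hcneg : -φ' (h - c) + φ' (h + c) < -(φ' 0) / 4 :=
        key h hLh c (by linarith [hc.1]) hc.2.le
      have hslope : (g h - g x) / (h - x) < 0 := by rw [← hceq]; linarith
      have hpos : 0 < h - x := by linarith
      have hlt : g h - g x < 0 := by
        have := (div_lt_iff₀ hpos).1 hslope
        linarith
      have hgh : g h = φ (2 * h) := by
        simp only [hg, sub_self, hφ0, zero_add]
        norm_num [two_mul]
      have hgx : g x = φ (h - x) + φ (h + x) := rfl
      rw [hgh, hgx] at hlt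
      linarith
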